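/- Let G be a finite simple graph with connected components G_1,…,G_k, where G_1,…,G_i (i ≥ 0) are isolated vertices and G_{i+1},…,G_k are components with at least two vertices each. Then cdim(G) = max{i−1, 0} + Σ_{j=i+1}^{k} cdim(G_j). -/

import Mathlib

open SimpleGraph

namespace ConnDim

open Classical in
/-- The local connectivity `κ(a,b)`: the maximum number of internally vertex-disjoint
`a`-`b` paths, with `κ(a,a) = ∞`. -/
noncomputable def localConn {V : Type*} (G : SimpleGraph V) (a b : V) : ℕ∞ :=
  if a = b then ⊤
  else sSup {n : ℕ∞ | ∃ Ps : Finset (G.Path a b),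
    (∀ p ∈ Ps, ∀ q ∈ Ps, p ≠ q → ∀ x : V,
        x ∈ p.1.support → x ∈ q.1.support → x = a ∨ x = b) ∧
    (Ps.card : ℕ∞) = n}

/-- A set `W` is connectivity resolving if vertices are determined by their
local connectivities to the elements of `W`. -/
def ConnResolving {V : Type*} (G : SimpleGraph V) (W : Set V) : Prop :=
  ∀ u v : V, (∀ w ∈ W, localConn G u w = localConn G v w) → u = v

/-- The connectivity dimension: minimum cardinality of a connectivity resolving set. -/
noncomputable def cdim {V : Type*} (G : SimpleGraph V) : ℕ :=
  sInf {n : ℕ | ∃ W : Set V, ConnResolving G W ∧ W.ncard = n}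

/-- A set `W` is metric resolving if vertices are determined by their distances
to the elements of `W`. -/
def MetricResolving {V : Type*} (G : SimpleGraph V) (W : Set V) : Prop :=
  ∀ u v : V, (∀ w ∈ W, G.dist u w = G.dist v w) → u = v

/-- The metric dimension: minimum cardinality of a metric resolving set. -/
noncomputable def mdim {V : Type*} (G : SimpleGraph V) : ℕ :=
  sInf {n : ℕ | ∃ W : Set V, MetricResolving G W ∧ W.ncard = n}

/-- `G` forces a `𝟙` representation if every minimum resolving set (basis) `B` admits a
vertex whose local connectivity to every element of `B` equals `1`. -/
def ForcesOne {V : Type*} (G : SimpleGraph V) : Prop :=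
  ∀ B : Set V, ConnResolving G B → B.ncard = cdim G →
    ∃ v : V, ∀ b ∈ B, localConn G v b = 1

/-- A cut vertex of a connected graph: its removal disconnects the graph. -/
def IsCutVertex {V : Type*} (G : SimpleGraph V) (v : V) : Prop :=
  G.Connected ∧ ¬ (G.induce {u : V | u ≠ v}).Connected

/-- A block of `G`: a maximal connected subgraph of `G` without a cut vertex of itself. -/
def IsBlock {V : Type*} (G : SimpleGraph V) (H : G.Subgraph) : Prop :=
  H.coe.Connected ∧ (∀ v, ¬ IsCutVertex H.coe v) ∧
  ∀ H' : G.Subgraph, H ≤ H' → H'.coe.Connected → (∀ v, ¬ IsCutVertex H'.coe v) → H' = H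

/-- The number of blocks of `G`. -/
noncomputable def numBlocks {V : Type*} (G : SimpleGraph V) : ℕ :=
  Nat.card {H : G.Subgraph // IsBlock G H}

/-- Two vertices are twins if they have the same neighborhood in the graph with
both of them deleted. -/
def AreTwins {V : Type*} (G : SimpleGraph V) (a b : V) : Prop :=
  ∀ x : V, x ≠ a → x ≠ b → (G.Adj a x ↔ G.Adj b x)

/-- The threshold graph generated by a binary sequence `L` (`false` = isolated vertex,
`true` = dominating vertex): two vertices are adjacent iff the later one was added
as a dominating vertex. -/
def thresholdGraph (L : List Bool) : SimpleGraph (Fin L.length) :=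
  SimpleGraph.fromRel (fun i j => i < j ∧ L.get j = true)

/-- The alternating binary sequence `0,1,0,1,…,0,1` of length `2 * n`. -/
def altList (n : ℕ) : List Bool := (List.replicate n [false, true]).flatten

/-- The join of two graphs on disjoint vertex sets by the bridge `v₁v₂`. -/
def bridgeJoin {V₁ V₂ : Type*} (G₁ : SimpleGraph V₁) (G₂ : SimpleGraph V₂)
    (v₁ : V₁) (v₂ : V₂) : SimpleGraph (V₁ ⊕ V₂) :=
  G₁.map Function.Embedding.inl ⊔ G₂.map Function.Embedding.inr
    ⊔ SimpleGraph.fromEdgeSet {s(Sum.inl v₁, Sum.inr v₂)}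

/-- The graph obtained from `G` by attaching a new leaf (the vertex `none`) to `u`. -/
def attachLeaf {V : Type*} (G : SimpleGraph V) (u : V) : SimpleGraph (Option V) :=
  G.map Function.Embedding.some ⊔ SimpleGraph.fromEdgeSet {s(some u, (none : Option V))}

/-- The chain of `t` triangles (triangle `i` has vertices `inl i.castSucc`, `inl i.succ`,
`inr (inl i)`), with a leaf `inr (inr ())` attached to the end vertex `inl 0`. -/
def triChain (t : ℕ) : SimpleGraph (Fin (t+1) ⊕ Fin t ⊕ Unit) :=
  SimpleGraph.fromRel (fun a b =>
    match a, b with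
    | Sum.inl i, Sum.inl j => (i : ℕ) + 1 = (j : ℕ)
    | Sum.inr (Sum.inl i), Sum.inl j => j = Fin.castSucc i ∨ j = Fin.succ i
    | Sum.inr (Sum.inr _), Sum.inl j => j = 0
    | _, _ => False)

section Helpers

variable {V : Type*} {G : SimpleGraph V}

lemma localConn_self (a : V) : localConn G a a = ⊤ := if_pos rfl

lemma localConn_ne_top [Fintype V] {a b : V} (hab : a ≠ b) : localConn G a b ≠ ⊤ := by
  classical
  rw [localConn, if_neg hab]
  have hbd : sSup {n : ℕ∞ | ∃ Ps : Finset (G.Path a b),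
      (∀ p ∈ Ps, ∀ q ∈ Ps, p ≠ q → ∀ x : V,
        x ∈ p.1.support → x ∈ q.1.support → x = a ∨ x = b) ∧
      (Ps.card : ℕ∞) = n} ≤ (Fintype.card (G.Path a b) : ℕ∞) := by
    apply sSup_le
    rintro n ⟨Ps, -, rfl⟩
    exact_mod_cast Nat.cast_le.mpr (Finset.card_le_univ Ps)
  intro h
  rw [h] at hbd
  exact (ENat.coe_lt_top _).not_ge hbd

lemma localConn_eq_zero {a b : V} (hab : a ≠ b) (hr : ¬ G.Reachable a b) :
    localConn G a b = 0 := by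
  classical
  rw [localConn, if_neg hab]
  haveI : IsEmpty (G.Path a b) := ⟨fun p => hr ⟨p.1⟩⟩
  refine le_antisymm (sSup_le ?_) zero_le
  rintro n ⟨Ps, -, rfl⟩
  simp [Finset.eq_empty_of_isEmpty Ps]

lemma one_le_localConn {a b : V} (hr : G.Reachable a b) :
    1 ≤ localConn G a b := by
  classical
  rcases eq_or_ne a b with rfl | hab
  · simp [localConn_self]
  rw [localConn, if_neg hab]
  obtain ⟨q⟩ := hr
  refine le_sSup ⟨{q.toPath}, ?_, by simp⟩
  intro p hp q' hq' hne
  simp only [Finset.mem_singleton] at hp hq'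
  exact absurd (hp.trans hq'.symm) hne

lemma localConn_pos_iff [Fintype V] {a b : V} :
    localConn G a b ≠ 0 ↔ (a = b ∨ G.Reachable a b) := by
  constructor
  · intro h
    by_contra hc
    push_neg at hc
    exact h (localConn_eq_zero hc.1 hc.2)
  · rintro (rfl | hr)
    · simp [localConn_self]
    · intro h; have := one_le_localConn (G := G) hr; rw [h] at this; simp at this


def liftWalk {s : Set V} :
    ∀ {u w : V} (p : G.Walk u w), (∀ x ∈ p.support, x ∈ s) → (hu : u ∈ s) → (hw : w ∈ s) →
      (G.induce s).Walk ⟨u, hu⟩ ⟨w, hw⟩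
  | _, _, SimpleGraph.Walk.nil, _, _, _ => SimpleGraph.Walk.nil
  | u, w, SimpleGraph.Walk.cons (v := b) ha p, h, hu, hw =>
      SimpleGraph.Walk.cons (u := (⟨u, hu⟩ : s)) (v := ⟨b, h b (by simp)⟩) ha
        (liftWalk p (fun x hx => h x (by simp [hx])) _ hw)

lemma liftWalk_map {s : Set V} :
    ∀ {u w : V} (p : G.Walk u w) (h : ∀ x ∈ p.support, x ∈ s) (hu : u ∈ s) (hw : w ∈ s),
      ((liftWalk p h hu hw).map (SimpleGraph.Embedding.induce s).toHom) = p
  | _, _, SimpleGraph.Walk.nil, _, _, _ => rfl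
  | u, w, SimpleGraph.Walk.cons (v := b) ha p, h, hu, hw => by
      exact congrArg (Walk.cons ha) (liftWalk_map p _ _ hw)

lemma mem_supp_of_mem_support {c : G.ConnectedComponent} {u w x : V} (hu : u ∈ c.supp)
    (p : G.Walk u w) (hx : x ∈ p.support) : x ∈ c.supp := by
  classical
  rw [ConnectedComponent.mem_supp_iff] at hu ⊢
  rw [← hu]
  exact (ConnectedComponent.eq.mpr ⟨p.takeUntil x hx⟩).symm

open Classical in
lemma localConn_induce_aux {c : G.ConnectedComponent} {u w : V} (hu : u ∈ c.supp) (hw : w ∈ c.supp) :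
    localConn (G.induce c.supp) ⟨u, hu⟩ ⟨w, hw⟩ = localConn G u w := by
  classical
  rcases eq_or_ne u w with rfl | huw
  · rw [show (⟨u, hu⟩ : c.supp) = ⟨u, hw⟩ from rfl, localConn_self, localConn_self]
  · have hne : (⟨u, hu⟩ : c.supp) ≠ ⟨w, hw⟩ := fun h => huw (congrArg Subtype.val h)
    rw [localConn, localConn, if_neg hne, if_neg huw]
    congr 1
    set emb := SimpleGraph.Embedding.induce (G := G) c.supp with hemb
    have hinj : Function.Injective emb.toHom := emb.injective
    ext n
    constructor
    · rintro ⟨Ps, hPs, rfl⟩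
      set down : (G.induce c.supp).Path ⟨u, hu⟩ ⟨w, hw⟩ → G.Path u w := fun p =>
        ⟨(p.1.map emb.toHom : G.Walk u w), Walk.map_isPath_of_injective hinj p.2⟩ with hdown
      have hdowninj : Function.Injective down := fun p q h =>
        Subtype.ext (Walk.map_injective_of_injective hinj _ _ (Subtype.ext_iff.mp h))
      refine ⟨Ps.image down, ?_, ?_⟩
      · rintro p' hp' q' hq' hne' x hxp hxq
        obtain ⟨p, hp, rfl⟩ := Finset.mem_image.mp hp'
        obtain ⟨q, hq, rfl⟩ := Finset.mem_image.mp hq'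
        have hpq : p ≠ q := fun h => hne' (by rw [h])
        simp only [hdown, Walk.support_map] at hxp hxq
        erw [Walk.support_map] at hxp hxq
        obtain ⟨y, hy, rfl⟩ := List.mem_map.mp hxp
        obtain ⟨z, hz, hzy⟩ := List.mem_map.mp hxq
        have : z = y := Subtype.ext hzy
        subst this
        rcases hPs p hp q hq hpq z hy hz with h | h
        · exact Or.inl (congrArg Subtype.val h)
        · exact Or.inr (congrArg Subtype.val h)
      · rw [Finset.card_image_of_injective _ hdowninj]
    · rintro ⟨Ps, hPs, rfl⟩
      have hsupp : ∀ p : G.Path u w, ∀ x ∈ p.1.support, x ∈ c.supp :=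
        fun p x hx => mem_supp_of_mem_support hu p.1 hx
      set lift : G.Path u w → (G.induce c.supp).Path ⟨u, hu⟩ ⟨w, hw⟩ := fun p =>
        ⟨liftWalk p.1 (hsupp p) hu hw,
          Walk.IsPath.of_map (f := emb.toHom) (by rw [liftWalk_map]; exact p.2)⟩ with hlift
      have hliftinj : Function.Injective lift := by
        intro p q h
        have : (liftWalk p.1 (hsupp p) hu hw).map emb.toHom
            = (liftWalk q.1 (hsupp q) hu hw).map emb.toHom := by
          rw [Subtype.ext_iff] at h; exact congrArg (Walk.map emb.toHom) h
        rw [liftWalk_map, liftWalk_map] at this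
        exact Subtype.ext this
      refine ⟨Ps.image lift, ?_, ?_⟩
      · rintro p' hp' q' hq' hne' y hyp hyq
        obtain ⟨p, hp, rfl⟩ := Finset.mem_image.mp hp'
        obtain ⟨q, hq, rfl⟩ := Finset.mem_image.mp hq'
        have hpq : p ≠ q := fun h => hne' (by rw [h])
        have hyp' : (y : V) ∈ p.1.support := by
          rw [← liftWalk_map p.1 (hsupp p) hu hw]; erw [Walk.support_map]
          exact List.mem_map_of_mem hyp
        have hyq' : (y : V) ∈ q.1.support := by
          rw [← liftWalk_map q.1 (hsupp q) hu hw]; erw [Walk.support_map]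
          exact List.mem_map_of_mem hyq
        rcases hPs p hp q hq hpq y hyp' hyq' with h | h
        · exact Or.inl (Subtype.ext h)
        · exact Or.inr (Subtype.ext h)
      · rw [Finset.card_image_of_injective _ hliftinj]

lemma localConn_induce {c : G.ConnectedComponent} {u : V} (hu : u ∈ c.supp) (y : ↥c.supp) :
    localConn (G.induce c.supp) ⟨u, hu⟩ y = localConn G u ↑y := by
  obtain ⟨w, hw⟩ := y
  exact localConn_induce_aux hu hw


lemma connResolving_univ [Fintype V] : ConnResolving G Set.univ := by
  intro u v h
  by_contra hne
  have h1 := h v (Set.mem_univ v)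
  rw [localConn_self] at h1
  exact localConn_ne_top hne h1

lemma exists_basis [Fintype V] : ∃ W : Set V, ConnResolving G W ∧ W.ncard = cdim G := by
  have hne : {n : ℕ | ∃ W : Set V, ConnResolving G W ∧ W.ncard = n}.Nonempty :=
    ⟨(Set.univ : Set V).ncard, Set.univ, connResolving_univ, rfl⟩
  exact Nat.sInf_mem hne

lemma cdim_le [Fintype V] {W : Set V} (h : ConnResolving G W) : cdim G ≤ W.ncard :=
  Nat.sInf_le ⟨W, h, rfl⟩

lemma one_le_cdim [Fintype V] (h : ∃ a b : V, a ≠ b) : 1 ≤ cdim G := by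
  rw [Nat.one_le_iff_ne_zero]
  intro h0
  obtain ⟨W, hW, hcard⟩ := exists_basis (G := G)
  rw [h0, Set.ncard_eq_zero (Set.toFinite W)] at hcard
  subst hcard
  obtain ⟨a, b, hab⟩ := h
  exact hab (hW a b (by simp))

lemma ncard_biUnion {ι : Type*} [DecidableEq ι] (T : Finset ι) (A : ι → Set V)
    (hfin : ∀ i, (A i).Finite) :
    (∀ i ∈ T, ∀ j ∈ T, i ≠ j → Disjoint (A i) (A j)) →
    (⋃ i ∈ T, A i).ncard = ∑ i ∈ T, (A i).ncard := by
  induction T using Finset.induction_on with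
  | empty => simp
  | @insert a s ha ih =>
    intro hdisj
    have hdisj' : Disjoint (A a) (⋃ i ∈ s, A i) := by
      simp only [Set.disjoint_iUnion_right]
      intro i hi
      exact hdisj a (Finset.mem_insert_self a s) i (Finset.mem_insert_of_mem hi)
        (fun h => ha (h ▸ hi))
    rw [Finset.set_biUnion_insert,
      Set.ncard_union_eq hdisj' (hfin a) (Set.Finite.biUnion s.finite_toSet fun i _ => hfin i),
      Finset.sum_insert ha,
      ih (fun i hi j hj hij => hdisj i (Finset.mem_insert_of_mem hi) j
        (Finset.mem_insert_of_mem hj) hij)]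

end Helpers

/-- the connectivity dimension of a graph is `max (i-1) 0` (where `i` is the
number of isolated-vertex components) plus the sum of the connectivity dimensions of the
components with at least two vertices. -/
theorem stmt0 {V : Type*} [Fintype V] (G : SimpleGraph V) :
    cdim G = max (Nat.card {c : G.ConnectedComponent // c.supp.ncard = 1} - 1) 0
      + ∑ᶠ c ∈ {c : G.ConnectedComponent | 2 ≤ c.supp.ncard},
          cdim (G.induce c.supp) := by
  classical
  set i := Nat.card {c : G.ConnectedComponent // c.supp.ncard = 1} with hi
  set I : Set V := {v : V | (G.connectedComponentMk v).supp.ncard = 1} with hIdef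
  have hmemsupp : ∀ v : V, v ∈ (G.connectedComponentMk v).supp :=
    fun v => (ConnectedComponent.mem_supp_iff _ _).mpr rfl
  have hIsupp : ∀ v ∈ I, (G.connectedComponentMk v).supp = {v} := by
    intro v hv
    obtain ⟨a, ha⟩ := Set.ncard_eq_one.mp hv
    have hv' : v ∈ ({a} : Set V) := ha ▸ hmemsupp v
    rw [ha, show v = a from hv']
  have hIiso : ∀ v ∈ I, ∀ w : V, G.Reachable v w → w = v := by
    intro v hv w hr
    have : w ∈ (G.connectedComponentMk v).supp :=
      (ConnectedComponent.mem_supp_iff _ _).mpr (ConnectedComponent.sound hr.symm)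
    rwa [hIsupp v hv] at this
  have hcardI : I.ncard = i := by
    rw [← Nat.card_coe_set_eq]
    apply Nat.card_eq_of_bijective (fun v => ⟨G.connectedComponentMk v.1, v.2⟩)
    constructor
    · rintro ⟨a, ha⟩ ⟨b, hb⟩ h
      simp only [Subtype.mk.injEq] at h
      exact Subtype.ext (hIiso a ha b (ConnectedComponent.exact h)).symm
    · rintro ⟨c, hc⟩
      obtain ⟨a, ha⟩ := Set.ncard_eq_one.mp hc
      have hac : G.connectedComponentMk a = c :=
        (ConnectedComponent.mem_supp_iff _ _).mp (by rw [ha]; rfl)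
      exact ⟨⟨a, show (G.connectedComponentMk a).supp.ncard = 1 by rw [hac]; exact hc⟩,
        Subtype.ext hac⟩
  set T : Finset G.ConnectedComponent :=
    Finset.univ.filter (fun c => 2 ≤ c.supp.ncard) with hTdef
  have hT : {c : G.ConnectedComponent | 2 ≤ c.supp.ncard} = (↑T : Set _) := by
    ext c; simp [hTdef]
  rw [hT, finsum_mem_coe_finset, Nat.max_zero]
  have hsuppdisj : ∀ c d : G.ConnectedComponent, c ≠ d → Disjoint c.supp d.supp :=
    fun c d h => G.pairwise_disjoint_supp_connectedComponent h
  have hIbig : ∀ v ∈ I, ∀ c ∈ T, v ∉ c.supp := by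
    intro v hv c hc hvc
    have h1 : c = G.connectedComponentMk v := ((ConnectedComponent.mem_supp_iff _ _).mp hvc).symm
    have h2 := (Finset.mem_filter.mp hc).2
    rw [h1] at h2
    have hv' : (G.connectedComponentMk v).supp.ncard = 1 := hv
    omega
  -- upper bound
  obtain ⟨S', hS'sub, hS'card⟩ :=
    Set.exists_subset_card_eq (s := I) (n := i - 1) (by omega)
  have hchoose : ∀ c : G.ConnectedComponent,
      ∃ B : Set ↥(c.supp), ConnResolving (G.induce c.supp) B ∧
        B.ncard = cdim (G.induce c.supp) := fun c => exists_basis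
  choose B hB1 hB2 using hchoose
  set W : Set V := S' ∪ ⋃ c ∈ T, (Subtype.val '' B c) with hWdef
  have hBsub : ∀ c : G.ConnectedComponent, (Subtype.val '' B c : Set V) ⊆ c.supp := by
    rintro c x ⟨y, -, rfl⟩; exact y.2
  have hWcard : W.ncard = (i - 1) + ∑ c ∈ T, cdim (G.induce c.supp) := by
    have hdisj2 : ∀ c ∈ T, ∀ d ∈ T, c ≠ d →
        Disjoint (Subtype.val '' B c : Set V) (Subtype.val '' B d) :=
      fun c _ d _ hcd => (hsuppdisj c d hcd).mono (hBsub c) (hBsub d)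
    have hdisj : Disjoint S' (⋃ c ∈ T, (Subtype.val '' B c : Set V)) := by
      rw [Set.disjoint_left]
      intro x hx hx2
      simp only [Set.mem_iUnion] at hx2
      obtain ⟨c, hc, hxc⟩ := hx2
      exact hIbig x (hS'sub hx) c hc (hBsub c hxc)
    rw [hWdef, Set.ncard_union_eq hdisj (Set.toFinite _) (Set.toFinite _),
      ncard_biUnion T _ (fun c => Set.toFinite _) hdisj2, hS'card]
    congr 1
    refine Finset.sum_congr rfl (fun c _ => ?_)
    rw [Set.ncard_image_of_injective _ Subtype.val_injective, hB2]
  have key : ∀ a b : V, (∀ w ∈ W, localConn G a w = localConn G b w) →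
      ∀ c ∈ T, a ∈ c.supp → a = b := by
    intro a b hab c hc hac
    have h2 : 2 ≤ c.supp.ncard := (Finset.mem_filter.mp hc).2
    have hcd : 1 ≤ cdim (G.induce c.supp) := by
      apply one_le_cdim
      obtain ⟨x, hx, y, hy, hxy⟩ := (Set.one_lt_ncard (s := c.supp) (Set.toFinite _)).mp (by omega)
      exact ⟨⟨x, hx⟩, ⟨y, hy⟩, fun hh => hxy (congrArg Subtype.val hh)⟩
    have hBne : (B c).Nonempty := by
      apply Set.nonempty_of_ncard_ne_zero
      rw [hB2]; omega
    obtain ⟨b0, hb0⟩ := hBne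
    have hb0W : (b0 : V) ∈ W :=
      Set.mem_union_right _ (Set.mem_biUnion hc ⟨b0, hb0, rfl⟩)
    have hb0supp : (b0 : V) ∈ c.supp := b0.2
    have haR : G.Reachable a ↑b0 := ConnectedComponent.exact
      (((ConnectedComponent.mem_supp_iff _ _).mp hac).trans
        ((ConnectedComponent.mem_supp_iff _ _).mp hb0supp).symm)
    have h1 : localConn G a ↑b0 ≠ 0 := localConn_pos_iff.mpr (Or.inr haR)
    have h2' : localConn G b ↑b0 ≠ 0 := by rw [← hab ↑b0 hb0W]; exact h1
    have hbsupp : b ∈ c.supp := by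
      rcases localConn_pos_iff.mp h2' with hbb | hr
      · rw [hbb]; exact hb0supp
      · rw [ConnectedComponent.mem_supp_iff]
        exact (ConnectedComponent.sound hr).trans
          ((ConnectedComponent.mem_supp_iff _ _).mp hb0supp)
    have hfin : (⟨a, hac⟩ : ↥c.supp) = ⟨b, hbsupp⟩ := by
      apply hB1 c
      intro w' hw'
      rw [localConn_induce hac w', localConn_induce hbsupp w']
      exact hab ↑w' (Set.mem_union_right _ (Set.mem_biUnion hc ⟨w', hw', rfl⟩))
    exact congrArg Subtype.val hfin
  have hWres : ConnResolving G W := by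
    intro u v h
    by_cases hu2 : 2 ≤ (G.connectedComponentMk u).supp.ncard
    · exact key u v h _ (Finset.mem_filter.mpr ⟨Finset.mem_univ _, hu2⟩) (hmemsupp u)
    by_cases hv2 : 2 ≤ (G.connectedComponentMk v).supp.ncard
    · exact (key v u (fun w hw => (h w hw).symm) _
        (Finset.mem_filter.mpr ⟨Finset.mem_univ _, hv2⟩) (hmemsupp v)).symm
    have hu1 : u ∈ I := by
      have h0 : 0 < (G.connectedComponentMk u).supp.ncard :=
        (Set.ncard_pos (Set.toFinite _)).mpr ⟨u, hmemsupp u⟩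
      show (G.connectedComponentMk u).supp.ncard = 1
      omega
    have hv1 : v ∈ I := by
      have h0 : 0 < (G.connectedComponentMk v).supp.ncard :=
        (Set.ncard_pos (Set.toFinite _)).mpr ⟨v, hmemsupp v⟩
      show (G.connectedComponentMk v).supp.ncard = 1
      omega
    by_cases huS : u ∈ S'
    · have h1 := h u (Set.mem_union_left _ huS)
      rw [localConn_self] at h1
      by_contra hne
      exact localConn_ne_top (fun hh : v = u => hne hh.symm) h1.symm
    by_cases hvS : v ∈ S'
    · have h1 := h v (Set.mem_union_left _ hvS)
      rw [localConn_self] at h1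
      by_contra hne
      exact localConn_ne_top hne h1
    by_contra hne
    have hd : (I \ S').ncard = I.ncard - S'.ncard := Set.ncard_diff hS'sub (Set.toFinite _)
    have h2 : 1 < (I \ S').ncard := (Set.one_lt_ncard (Set.toFinite _)).mpr
      ⟨u, ⟨hu1, huS⟩, v, ⟨hv1, hvS⟩, hne⟩
    omega
  have hub : cdim G ≤ (i - 1) + ∑ c ∈ T, cdim (G.induce c.supp) := by
    rw [← hWcard]; exact cdim_le hWres
  -- lower bound
  obtain ⟨W₀, hres, hcard⟩ := exists_basis (G := G)
  have hIW : i - 1 ≤ (I ∩ W₀).ncard := by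
    have hdle : (I \ W₀).ncard ≤ 1 := by
      by_contra hgt
      push_neg at hgt
      obtain ⟨a, ha, b, hb, hab⟩ := (Set.one_lt_ncard (Set.toFinite _)).mp hgt
      apply hab
      apply hres a b
      intro w hw
      have haw : a ≠ w := fun h => ha.2 (h ▸ hw)
      have hbw : b ≠ w := fun h => hb.2 (h ▸ hw)
      rw [localConn_eq_zero haw (fun hr => haw (hIiso a ha.1 w hr).symm),
        localConn_eq_zero hbw (fun hr => hbw (hIiso b hb.1 w hr).symm)]
    have heq := Set.ncard_inter_add_ncard_diff_eq_ncard I W₀ (Set.toFinite I)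
    omega
  have hcW : ∀ c ∈ T, cdim (G.induce c.supp) ≤ (c.supp ∩ W₀).ncard := by
    intro c _
    have hBres : ConnResolving (G.induce c.supp) (Subtype.val ⁻¹' W₀) := by
      intro x y hxy
      apply Subtype.ext
      apply hres ↑x ↑y
      intro w hw
      by_cases hwc : w ∈ c.supp
      · rw [← localConn_induce x.2 ⟨w, hwc⟩, ← localConn_induce y.2 ⟨w, hwc⟩]
        exact hxy ⟨w, hwc⟩ hw
      · have hxw : (x : V) ≠ w := fun h => hwc (h ▸ x.2)
        have hyw : (y : V) ≠ w := fun h => hwc (h ▸ y.2)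
        have hxr : ¬ G.Reachable ↑x w := fun hr => hwc
          ((ConnectedComponent.mem_supp_iff _ _).mpr
            ((ConnectedComponent.sound hr.symm).trans
              ((ConnectedComponent.mem_supp_iff _ _).mp x.2)))
        have hyr : ¬ G.Reachable ↑y w := fun hr => hwc
          ((ConnectedComponent.mem_supp_iff _ _).mpr
            ((ConnectedComponent.sound hr.symm).trans
              ((ConnectedComponent.mem_supp_iff _ _).mp y.2)))
        rw [localConn_eq_zero hxw hxr, localConn_eq_zero hyw hyr]
    calc cdim (G.induce c.supp) ≤ (Subtype.val ⁻¹' W₀ : Set ↥c.supp).ncard := cdim_le hBres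
      _ = (c.supp ∩ W₀).ncard := by
          rw [← Set.ncard_image_of_injective _ Subtype.val_injective,
            Subtype.image_preimage_coe]
  have hsum : (I ∩ W₀).ncard + ∑ c ∈ T, (c.supp ∩ W₀).ncard ≤ W₀.ncard := by
    have hdisj2 : ∀ c ∈ T, ∀ d ∈ T, c ≠ d →
        Disjoint (c.supp ∩ W₀) (d.supp ∩ W₀) :=
      fun c _ d _ hcd => (hsuppdisj c d hcd).mono Set.inter_subset_left Set.inter_subset_left
    have hdisj : Disjoint (I ∩ W₀) (⋃ c ∈ T, (c.supp ∩ W₀)) := by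
      rw [Set.disjoint_left]
      intro x hx hx2
      simp only [Set.mem_iUnion] at hx2
      obtain ⟨c, hc, hxc⟩ := hx2
      exact hIbig x hx.1 c hc hxc.1
    have hcard2 : ((I ∩ W₀) ∪ ⋃ c ∈ T, (c.supp ∩ W₀)).ncard
        = (I ∩ W₀).ncard + ∑ c ∈ T, (c.supp ∩ W₀).ncard := by
      rw [Set.ncard_union_eq hdisj (Set.toFinite _) (Set.toFinite _),
        ncard_biUnion T _ (fun c => Set.toFinite _) hdisj2]
    rw [← hcard2]
    apply Set.ncard_le_ncard _ (Set.toFinite _)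
    intro x hx
    rcases hx with hx | hx
    · exact hx.2
    · simp only [Set.mem_iUnion] at hx
      obtain ⟨c, hc, hxc⟩ := hx
      exact hxc.2
  have hlb : (i - 1) + ∑ c ∈ T, cdim (G.induce c.supp) ≤ cdim G := by
    calc (i - 1) + ∑ c ∈ T, cdim (G.induce c.supp)
        ≤ (I ∩ W₀).ncard + ∑ c ∈ T, (c.supp ∩ W₀).ncard :=
          Nat.add_le_add hIW (Finset.sum_le_sum hcW)
      _ ≤ W₀.ncard := hsum
      _ = cdim G := hcard
  omega


end ConnDim
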